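/- Let 0 < a < b and 0 < y ≤ 1. Then B(b,y)/B(a,y) ≤ (a/b) · (b^b (a+y)^(a+y) / (a^a (b+y)^(b+y)))^(1 - 1/y). -/

import Mathlib

open Real MeasureTheory intervalIntegral

noncomputable def B (x y : ℝ) : ℝ := ∫ t in (0:ℝ)..1, t ^ (x - 1) * (1 - t) ^ (y - 1)

open Filter Topology

private lemma B_eq_Gamma' {x y : ℝ} (hx : 0 < x) (hy : 0 < y) :
    B x y = Real.Gamma x * Real.Gamma y / Real.Gamma (x + y) := by
  have hbeta : Complex.Gamma x * Complex.Gamma y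
      = Complex.Gamma (x + y) * Complex.betaIntegral x y :=
    Complex.Gamma_mul_Gamma_eq_betaIntegral (by simpa using hx) (by simpa using hy)
  have hBc : Complex.betaIntegral x y = (B x y : ℂ) := by
    rw [Complex.betaIntegral, B]
    rw [← intervalIntegral.integral_ofReal]
    apply intervalIntegral.integral_congr
    intro t ht
    rw [Set.uIcc_of_le (by norm_num : (0:ℝ) ≤ 1)] at ht
    have h1 : ((t:ℝ) ^ (x - 1) : ℝ) = (t:ℂ) ^ ((x:ℂ) - 1) := by
      rw [Complex.ofReal_cpow ht.1]; push_cast; ring_nf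
    have h2 : (((1 - t:ℝ)) ^ (y - 1) : ℝ) = ((1:ℂ) - (t:ℂ)) ^ ((y:ℂ) - 1) := by
      rw [Complex.ofReal_cpow (by linarith [ht.2] : (0:ℝ) ≤ 1 - t)]; push_cast; ring_nf
    push_cast
    rw [← h1, ← h2]
  have h2 : ((Real.Gamma x * Real.Gamma y : ℝ) : ℂ)
      = ((Real.Gamma (x+y) * B x y : ℝ) : ℂ) := by
    push_cast
    rw [← Complex.Gamma_ofReal, ← Complex.Gamma_ofReal, ← hBc, hbeta,
      show ((x:ℂ) + y) = ((x+y : ℝ) : ℂ) by push_cast; ring, Complex.Gamma_ofReal]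
  have h3 : Real.Gamma x * Real.Gamma y = Real.Gamma (x+y) * B x y :=
    Complex.ofReal_injective h2
  have hne : Real.Gamma (x+y) ≠ 0 := (Real.Gamma_pos_of_pos (by linarith)).ne'
  field_simp
  linarith [h3]

private lemma key_phi' {u y : ℝ} (hu : 0 < u) (hy : 0 < y) :
    y/((u+1)*(u+y)) ≤ (log (u+y) + log (u+1)) - (log u + log (u+y+1)) := by
  set f : ℝ → ℝ := fun s => log (u+s) - log (u+s+1) - s/((u+1)*(u+s)) with hf
  have hderiv : ∀ s ∈ Set.Icc (0:ℝ) y,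
      HasDerivAt f (1/(u+s) - 1/(u+s+1) - u/((u+1)*(u+s)^2)) s := by
    intro s hs
    have hus : 0 < u + s := by have := hs.1; linarith
    have h1 : HasDerivAt (fun s => log (u+s)) (1/(u+s)) s := by
      have := ((hasDerivAt_id s).const_add u).log hus.ne'
      simpa [one_div] using this
    have h2 : HasDerivAt (fun s => log (u+s+1)) (1/(u+s+1)) s := by
      have : HasDerivAt (fun s : ℝ => u+s+1) 1 s := by
        simpa using ((hasDerivAt_id s).const_add u).add_const 1
      have := this.log (by linarith : u+s+1 ≠ 0)
      simpa [one_div] using this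
    have h3 : HasDerivAt (fun s => s/((u+1)*(u+s))) (u/((u+1)*(u+s)^2)) s := by
      have hd : HasDerivAt (fun s : ℝ => (u+1)*(u+s)) (u+1) s := by
        simpa using (((hasDerivAt_id s).const_add u).const_mul (u+1))
      have hne : (u+1)*(u+s) ≠ 0 := by positivity
      have : HasDerivAt (fun s : ℝ => s/((u+1)*(u+s)))
          ((1 * ((u+1)*(u+s)) - s*(u+1)) / ((u+1)*(u+s))^2) s := (hasDerivAt_id s).div hd hne
      convert this using 1
      field_simp
      ring
    exact (h1.sub h2).sub h3
  have hmono : MonotoneOn f (Set.Icc 0 y) := by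
    apply monotoneOn_of_deriv_nonneg (convex_Icc 0 y)
    · exact fun s hs => ((hderiv s hs).continuousAt).continuousWithinAt
    · intro s hs
      rw [interior_Icc] at hs
      exact ((hderiv s ⟨hs.1.le, hs.2.le⟩).differentiableAt).differentiableWithinAt
    · intro s hs
      rw [interior_Icc] at hs
      rw [(hderiv s ⟨hs.1.le, hs.2.le⟩).deriv]
      have hus : 0 < u + s := by linarith [hs.1]
      have h4 : 1/(u+s) - 1/(u+s+1) = 1/((u+s)*(u+s+1)) := by
        field_simp
        ring
      rw [h4, div_sub_div _ _ (by positivity) (by positivity : (u+1)*(u+s)^2 ≠ 0)]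
      apply div_nonneg _ (by positivity)
      nlinarith [hs.1, hu, hus]
  have h0y : f 0 ≤ f y := hmono (Set.left_mem_Icc.2 hy.le) (Set.right_mem_Icc.2 hy.le) hy.le
  simp only [hf] at h0y
  norm_num at h0y
  linarith [h0y]

private lemma term_le' {u y : ℝ} (hu : 0 < u) (hy0 : 0 < y) (hy1 : y ≤ 1) :
    1/(u+y) - 1/(u+1) ≤ (1/y - 1) * ((log (u+y) - log u) - (log (u+y+1) - log (u+1))) := by
  have hk := key_phi' hu hy0
  have h1 : 1/(u+y) - 1/(u+1) = (1-y)/((u+1)*(u+y)) := by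
    rw [div_sub_div _ _ (by positivity : u+y ≠ 0) (by positivity : u+1 ≠ 0)]
    rw [show (1:ℝ)*(u+1) - (u+y)*1 = 1-y by ring, show (u+y)*(u+1) = (u+1)*(u+y) by ring]
  have h2 : (1/y - 1) = (1-y)/y := by field_simp
  rw [h1, h2]
  have h3 : (1-y)/((u+1)*(u+y)) = ((1-y)/y) * (y/((u+1)*(u+y))) := by
    field_simp
  rw [h3]
  have h4 : (0:ℝ) ≤ (1-y)/y := div_nonneg (by linarith) hy0.le
  calc ((1-y)/y) * (y/((u+1)*(u+y)))
      ≤ ((1-y)/y) * ((log (u+y) + log (u+1)) - (log u + log (u+y+1))) :=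
        mul_le_mul_of_nonneg_left hk h4
    _ = (1-y)/y * ((log (u+y) - log u) - (log (u+y+1) - log (u+1))) := by ring

private lemma Q_antitone' {a b y : ℝ} (ha : 0 < a) (hab : a ≤ b) (hy0 : 0 < y) (hy1 : y ≤ 1)
    (n : ℕ) :
    ((∑ j ∈ Finset.range (n+1), (log (b+y+j) - log (b+j))) +
      (log b + (1/y - 1)*(b*log b - (b+y)*log (b+y))) - log (b+n+1))
    ≤ ((∑ j ∈ Finset.range (n+1), (log (a+y+j) - log (a+j))) +
      (log a + (1/y - 1)*(a*log a - (a+y)*log (a+y))) - log (a+n+1)) := by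
  set Q : ℝ → ℝ := fun x => (∑ j ∈ Finset.range (n+1), (log (x+y+j) - log (x+j))) +
      (log x + (1/y - 1)*(x*log x - (x+y)*log (x+y))) - log (x+n+1) with hQdef
  have hderiv : ∀ x : ℝ, 0 < x → HasDerivAt Q
      ((∑ j ∈ Finset.range (n+1), (1/(x+y+j) - 1/(x+j))) +
        (1/x + (1/y - 1)*(log x - log (x+y))) - 1/(x+n+1)) x := by
    intro x hx
    have hsum : HasDerivAt (fun x => ∑ j ∈ Finset.range (n+1), (log (x+y+j) - log (x+j)))
        (∑ j ∈ Finset.range (n+1), (1/(x+y+j) - 1/(x+j))) x := by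
      apply HasDerivAt.fun_sum
      intro j hj
      have hj1 : (0:ℝ) ≤ (j:ℝ) := Nat.cast_nonneg j
      have h1 : HasDerivAt (fun x : ℝ => log (x+y+j)) (1/(x+y+j)) x := by
        have hd : HasDerivAt (fun x : ℝ => x+y+(j:ℝ)) 1 x := by
          simpa using ((hasDerivAt_id x).add_const y).add_const (j:ℝ)
        simpa [one_div] using hd.log (by positivity : x+y+(j:ℝ) ≠ 0)
      have h2 : HasDerivAt (fun x : ℝ => log (x+j)) (1/(x+j)) x := by
        have hd : HasDerivAt (fun x : ℝ => x+(j:ℝ)) 1 x := (hasDerivAt_id x).add_const (j:ℝ)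
        simpa [one_div] using hd.log (by positivity : x+(j:ℝ) ≠ 0)
      exact h1.sub h2
    have hxy : 0 < x + y := by linarith
    have hmul1 : HasDerivAt (fun x : ℝ => x * log x) (log x + 1) x :=
      Real.hasDerivAt_mul_log hx.ne'
    have hmul2 : HasDerivAt (fun x : ℝ => (x+y) * log (x+y)) (log (x+y) + 1) x := by
      have hd : HasDerivAt (fun x : ℝ => x+y) 1 x := (hasDerivAt_id x).add_const y
      have := (Real.hasDerivAt_mul_log hxy.ne').comp x hd
      simpa [Function.comp_def] using this
    have hlogx : HasDerivAt (fun x : ℝ => log x) (1/x) x := by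
      simpa [one_div] using Real.hasDerivAt_log hx.ne'
    have hE : HasDerivAt (fun x : ℝ => log x + (1/y - 1)*(x*log x - (x+y)*log (x+y)))
        (1/x + (1/y - 1)*(log x - log (x+y))) x := by
      have : HasDerivAt (fun x : ℝ => log x + (1/y - 1)*(x*log x - (x+y)*log (x+y)))
          (1/x + (1/y - 1)*((log x + 1) - (log (x+y) + 1))) x :=
        hlogx.add (((hmul1.sub hmul2)).const_mul (1/y - 1))
      convert this using 1
      ring
    have hlast : HasDerivAt (fun x : ℝ => log (x+n+1)) (1/(x+n+1)) x := by
      have hd : HasDerivAt (fun x : ℝ => x+(n:ℝ)+1) 1 x := by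
        simpa using ((hasDerivAt_id x).add_const (n:ℝ)).add_const 1
      simpa [one_div] using hd.log (by positivity : x+(n:ℝ)+1 ≠ 0)
    exact (hsum.add hE).sub hlast
  have hDneg : ∀ x : ℝ, 0 < x →
      ((∑ j ∈ Finset.range (n+1), (1/(x+y+j) - 1/(x+j))) +
        (1/x + (1/y - 1)*(log x - log (x+y))) - 1/(x+n+1)) ≤ 0 := by
    intro x hx
    set F : ℕ → ℝ := fun j => 1/(x+j) with hF
    set G : ℕ → ℝ := fun j => log (x+y+j) - log (x+j) with hG
    have t1 := Finset.sum_range_sub' F (n+1)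
    have t2 := Finset.sum_range_sub' G (n+1)
    have hper : ∀ j ∈ Finset.range (n+1), (1/(x+y+j) - 1/(x+j)) ≤
        (-(F j - F (j+1)) + (1/y - 1)*(G j - G (j+1))) := by
      intro j hj
      have hu : (0:ℝ) < x + j := by positivity
      have h := term_le' (u := x + j) hu hy0 hy1
      simp only [hF, hG]
      push_cast
      rw [show x+y+(j:ℝ) = x+(j:ℝ)+y from by ring,
          show x+y+((j:ℝ)+1) = x+(j:ℝ)+y+1 from by ring,
          show x+((j:ℝ)+1) = x+(j:ℝ)+1 from by ring]
      linarith [h]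
    have hsumle := Finset.sum_le_sum hper
    have hsplit : ∑ j ∈ Finset.range (n+1), (-(F j - F (j+1)) + (1/y - 1)*(G j - G (j+1)))
        = -(F 0 - F (n+1)) + (1/y - 1)*(G 0 - G (n+1)) := by
      rw [Finset.sum_add_distrib, Finset.sum_neg_distrib, ← Finset.mul_sum, t1, t2]
    rw [hsplit] at hsumle
    have hF0 : F 0 = 1/x := by simp [hF]
    have hFn : F (n+1) = 1/(x+n+1) := by simp [hF]; ring_nf
    have hG0 : G 0 = log (x+y) - log x := by simp [hG]
    have hGn : G (n+1) = log (x+y+n+1) - log (x+n+1) := by simp [hG]; ring_nf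
    rw [hF0, hFn, hG0, hGn] at hsumle
    have hlogmono : log (x+n+1) ≤ log (x+y+n+1) :=
      Real.log_le_log (by positivity) (by linarith)
    have hcoef : (0:ℝ) ≤ 1/y - 1 := by
      rw [sub_nonneg]
      rw [le_div_iff₀ hy0]
      linarith
    nlinarith [mul_le_mul_of_nonneg_left (sub_nonneg.2 hlogmono) hcoef]
  have hanti : AntitoneOn Q (Set.Icc a b) := by
    apply antitoneOn_of_deriv_nonpos (convex_Icc a b)
    · intro x hx
      exact ((hderiv x (by linarith [hx.1])).continuousAt).continuousWithinAt
    · intro x hx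
      rw [interior_Icc] at hx
      exact ((hderiv x (by linarith [hx.1])).differentiableAt).differentiableWithinAt
    · intro x hx
      rw [interior_Icc] at hx
      rw [(hderiv x (by linarith [hx.1])).deriv]
      exact hDneg x (by linarith [hx.1])
  exact hanti (Set.left_mem_Icc.2 hab) (Set.right_mem_Icc.2 hab) hab

private lemma ratio_tendsto' {a b y : ℝ} (ha : 0 < a) (hab : a < b) (hy0 : 0 < y) :
    Tendsto (fun n : ℕ => ∏ j ∈ Finset.range (n+1), ((a+j)*(b+y+j))/((b+j)*(a+y+j)))
      atTop (𝓝 (Real.Gamma b * Real.Gamma (a+y) / (Real.Gamma a * Real.Gamma (b+y)))) := by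
  have hb : 0 < b := lt_trans ha hab
  have hay : 0 < a + y := by linarith
  have hby : 0 < b + y := by linarith
  have hne : Real.Gamma a * Real.Gamma (b+y) ≠ 0 :=
    mul_ne_zero (Real.Gamma_pos_of_pos ha).ne' (Real.Gamma_pos_of_pos hby).ne'
  have htop := ((Real.GammaSeq_tendsto_Gamma b).mul (Real.GammaSeq_tendsto_Gamma (a+y))).div
    ((Real.GammaSeq_tendsto_Gamma a).mul (Real.GammaSeq_tendsto_Gamma (b+y))) hne
  apply htop.congr'
  filter_upwards [eventually_ge_atTop 1] with n hn
  have hnpos : (0:ℝ) < n := by exact_mod_cast hn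
  have hfac : ((n.factorial : ℕ):ℝ) ≠ 0 := by exact_mod_cast (Nat.factorial_pos n).ne'
  have hprod : ∀ c : ℝ, 0 < c → (0:ℝ) < ∏ j ∈ Finset.range (n+1), (c + j) := by
    intro c hc
    apply Finset.prod_pos
    intro j hj
    positivity
  have hPa := hprod a ha; have hPb := hprod b hb
  have hPay := hprod (a+y) hay; have hPby := hprod (b+y) hby
  have hr : (∏ j ∈ Finset.range (n+1), ((a+j)*(b+y+j))/((b+j)*(a+y+j)))
      = ((∏ j ∈ Finset.range (n+1), (a+j)) * (∏ j ∈ Finset.range (n+1), (b+y+j)))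
        / ((∏ j ∈ Finset.range (n+1), (b+j)) * (∏ j ∈ Finset.range (n+1), (a+y+j))) := by
    rw [Finset.prod_div_distrib, Finset.prod_mul_distrib, Finset.prod_mul_distrib]
  have hrpow : (n:ℝ)^b * (n:ℝ)^(a+y) = (n:ℝ)^a * (n:ℝ)^(b+y) := by
    rw [← Real.rpow_add hnpos, ← Real.rpow_add hnpos]
    ring_nf
  have hna : (0:ℝ) < (n:ℝ)^a := Real.rpow_pos_of_pos hnpos a
  have hnby : (0:ℝ) < (n:ℝ)^(b+y) := Real.rpow_pos_of_pos hnpos (b+y)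
  simp only [Real.GammaSeq, Pi.div_apply]
  rw [hr]
  have hnb : (0:ℝ) < (n:ℝ)^b := Real.rpow_pos_of_pos hnpos b
  have hnay : (0:ℝ) < (n:ℝ)^(a+y) := Real.rpow_pos_of_pos hnpos (a+y)
  rw [div_eq_div_iff (by positivity) (by positivity)]
  field_simp
  ring_nf
  ring_nf at hrpow
  linear_combination hrpow

theorem stmt6 (a b y : ℝ) (ha : 0 < a) (hab : a < b) (hy0 : 0 < y) (hy1 : y ≤ 1) :
    B b y / B a y ≤
      (a / b) * (b ^ b * (a + y) ^ (a + y) / (a ^ a * (b + y) ^ (b + y))) ^ (1 - 1 / y) := by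
  have hb : 0 < b := lt_trans ha hab
  have hay : 0 < a + y := by linarith
  have hby : 0 < b + y := by linarith
  have hGa := Real.Gamma_pos_of_pos ha
  have hGb := Real.Gamma_pos_of_pos hb
  have hGy := Real.Gamma_pos_of_pos hy0
  have hGay := Real.Gamma_pos_of_pos hay
  have hGby := Real.Gamma_pos_of_pos hby
  -- the ratio as a Gamma expression
  have hratio : B b y / B a y
      = Real.Gamma b * Real.Gamma (a+y) / (Real.Gamma a * Real.Gamma (b+y)) := by
    rw [B_eq_Gamma' hb hy0, B_eq_Gamma' ha hy0]
    field_simp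
  -- the target constant
  set E : ℝ → ℝ := fun x => log x + (1/y - 1)*(x*log x - (x+y)*log (x+y)) with hEdef
  -- bound for partial products
  have hbound : ∀ n : ℕ, (∏ j ∈ Finset.range (n+1), ((a+j)*(b+y+j))/((b+j)*(a+y+j)))
      ≤ Real.exp (E a - E b) * ((b+n+1)/(a+n+1)) := by
    intro n
    have hQ := Q_antitone' ha hab.le hy0 hy1 n
    have hprodexp : (∏ j ∈ Finset.range (n+1), ((a+j)*(b+y+j))/((b+j)*(a+y+j)))
        = Real.exp ((∑ j ∈ Finset.range (n+1), (log (b+y+j) - log (b+j)))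
          - (∑ j ∈ Finset.range (n+1), (log (a+y+j) - log (a+j)))) := by
      rw [← Finset.sum_sub_distrib, Real.exp_sum]
      apply Finset.prod_congr rfl
      intro j hj
      have h1 : (0:ℝ) < a + j := by positivity
      have h2 : (0:ℝ) < b + j := by positivity
      have h3 : (0:ℝ) < a + y + j := by positivity
      have h4 : (0:ℝ) < b + y + j := by positivity
      rw [show (log (b+y+(j:ℝ)) - log (b+(j:ℝ))) - (log (a+y+(j:ℝ)) - log (a+(j:ℝ)))
          = (log (a+(j:ℝ)) + log (b+y+(j:ℝ))) - (log (b+(j:ℝ)) + log (a+y+(j:ℝ))) from by ring]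
      rw [Real.exp_sub, Real.exp_add, Real.exp_add, Real.exp_log h1, Real.exp_log h2,
        Real.exp_log h3, Real.exp_log h4]
    rw [hprodexp]
    have hstep : (∑ j ∈ Finset.range (n+1), (log (b+y+j) - log (b+j)))
          - (∑ j ∈ Finset.range (n+1), (log (a+y+j) - log (a+j)))
        ≤ (E a - E b) + (log (b+n+1) - log (a+n+1)) := by
      simp only [hEdef]
      linarith [hQ]
    calc Real.exp ((∑ j ∈ Finset.range (n+1), (log (b+y+j) - log (b+j)))
          - (∑ j ∈ Finset.range (n+1), (log (a+y+j) - log (a+j))))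
        ≤ Real.exp ((E a - E b) + (log (b+n+1) - log (a+n+1))) := Real.exp_le_exp.2 hstep
      _ = Real.exp (E a - E b) * ((b+n+1)/(a+n+1)) := by
          rw [Real.exp_add, Real.exp_sub, Real.exp_sub,
            Real.exp_log (by positivity : (0:ℝ) < b+n+1),
            Real.exp_log (by positivity : (0:ℝ) < a+n+1)]
  -- limit of the RHS sequence
  have hlimR : Tendsto (fun n : ℕ => Real.exp (E a - E b) * ((b+n+1)/(a+n+1)))
      atTop (𝓝 (Real.exp (E a - E b))) := by
    have h1 : Tendsto (fun n : ℕ => (a+(n:ℝ)+1)) atTop atTop := by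
      apply Filter.tendsto_atTop_add_const_right
      apply Filter.tendsto_atTop_add_const_left
      exact tendsto_natCast_atTop_atTop
    have h2 : Tendsto (fun n : ℕ => (a+(n:ℝ)+1)⁻¹) atTop (𝓝 0) := h1.inv_tendsto_atTop
    have h3 : Tendsto (fun n : ℕ => 1 + (b-a)*(a+(n:ℝ)+1)⁻¹) atTop (𝓝 1) := by
      have := tendsto_const_nhds (x := (1:ℝ)) (f := atTop (α := ℕ)) |>.add
        (h2.const_mul (b-a))
      simpa using this
    have h4 : (fun n : ℕ => (b+(n:ℝ)+1)/(a+(n:ℝ)+1)) = fun n : ℕ => 1 + (b-a)*(a+(n:ℝ)+1)⁻¹ := by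
      funext n
      have : (0:ℝ) < a+(n:ℝ)+1 := by positivity
      field_simp
      ring
    have h5 : Tendsto (fun n : ℕ => (b+(n:ℝ)+1)/(a+(n:ℝ)+1)) atTop (𝓝 1) := by
      rw [h4]; exact h3
    have := (tendsto_const_nhds (x := Real.exp (E a - E b)) (f := atTop (α := ℕ))).mul h5
    simpa using this
  -- conclude
  have hmain : Real.Gamma b * Real.Gamma (a+y) / (Real.Gamma a * Real.Gamma (b+y))
      ≤ Real.exp (E a - E b) :=
    le_of_tendsto_of_tendsto' (ratio_tendsto' ha hab hy0) hlimR hbound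
  rw [hratio]
  refine le_trans hmain (le_of_eq ?_)
  -- identify exp (E a - E b) with the RHS
  have hX : (0:ℝ) < b ^ b * (a + y) ^ (a + y) / (a ^ a * (b + y) ^ (b + y)) := by
    have := Real.rpow_pos_of_pos hb b
    have := Real.rpow_pos_of_pos hay (a+y)
    have := Real.rpow_pos_of_pos ha a
    have := Real.rpow_pos_of_pos hby (b+y)
    positivity
  have hlogX : log (b ^ b * (a + y) ^ (a + y) / (a ^ a * (b + y) ^ (b + y)))
      = b*log b + (a+y)*log (a+y) - (a*log a + (b+y)*log (b+y)) := by
    rw [Real.log_div (by positivity) (by positivity), Real.log_mul (by positivity) (by positivity),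
      Real.log_mul (by positivity) (by positivity),
      Real.log_rpow hb, Real.log_rpow hay, Real.log_rpow ha, Real.log_rpow hby]
  rw [Real.rpow_def_of_pos hX, hlogX]
  rw [show a/b = Real.exp (log (a/b)) from (Real.exp_log (by positivity)).symm]
  rw [← Real.exp_add, Real.log_div ha.ne' hb.ne']
  congr 1
  simp only [hEdef]
  ring
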